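/- arXiv:2212.11748 — 3 statements merged into one kernel-verified Lean document; each statement's English description precedes it below -/
import Mathlib

section
/- On the reference tetrahedron T with barycentric coordinates λ₁, λ₂, λ₃, λ₄, for each i ∈ {1,2,3,4} the polynomial φᵢ = 5λᵢ³ − 5λᵢ² + λᵢ satisfies ∫_F φᵢ q ds = 0 for every face F of T and every polynomial q on F of degree at most 1. -/
open MeasureTheory MvPolynomial
open scoped RealInnerProductSpace ENNReal NNReal

noncomputable section

/-- Euclidean 3-space. -/
abbrev E3 := EuclideanSpace ℝ (Fin 3)

/-- Evaluate a polynomial in 3 variables at a point of `E3`. -/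
def evalP (x : E3) (p : MvPolynomial (Fin 3) ℝ) : ℝ :=
  MvPolynomial.eval (fun j => x j) p

/-- The (closed) facet of the tetrahedron opposite to vertex `i`. -/
def face (a : Fin 4 → E3) (i : Fin 4) : Set E3 :=
  convexHull ℝ (a '' {j | j ≠ i})

/-- The (closed) tetrahedron with vertices `a`. -/
def tetra (a : Fin 4 → E3) : Set E3 :=
  convexHull ℝ (Set.range a)

/- ### Auxiliary lemmas -/

lemma lin_int (A B t : ℝ) : ∫ y in (0:ℝ)..t, (A + B*y) = A*t + B*(t^2/2) := by
  rw [intervalIntegral.integral_add (f := fun _ => A) (g := fun y => B*y) intervalIntegrable_const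
      ((continuous_const.mul continuous_id').intervalIntegrable 0 t),
    intervalIntegral.integral_const, intervalIntegral.integral_const_mul,
    integral_id]
  simp
  ring

lemma poly01 (c0 c1 c2 c3 c4 c5 : ℝ) :
    ∫ x in (0:ℝ)..1, (c0 + c1*x + c2*x^2 + c3*x^3 + c4*x^4 + c5*x^5) =
      c0 + c1/2 + c2/3 + c3/4 + c4/5 + c5/6 := by
  have h : ∀ (n : ℕ) (c : ℝ), ∫ x in (0:ℝ)..1, c * x^n = c / (n+1) := by
    intro n c
    rw [intervalIntegral.integral_const_mul, integral_pow]
    simp [div_eq_mul_inv, mul_comm]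
  have hi : ∀ (n : ℕ) (c : ℝ), IntervalIntegrable (fun x => c * x^n) volume 0 1 :=
    fun n c => ((continuous_const.mul (continuous_pow n)).intervalIntegrable 0 1)
  have e : ∀ x : ℝ, c0 + c1*x + c2*x^2 + c3*x^3 + c4*x^4 + c5*x^5 =
      c0*x^0 + (c1*x^1 + (c2*x^2 + (c3*x^3 + (c4*x^4 + c5*x^5)))) := by intro x; ring
  rw [intervalIntegral.integral_congr (g := fun x => c0*x^0 + (c1*x^1 + (c2*x^2 + (c3*x^3 + (c4*x^4 + c5*x^5)))))
      (fun x _ => e x)]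
  rw [intervalIntegral.integral_add (hi 0 c0) (((hi 1 c1).add ((hi 2 c2).add ((hi 3 c3).add ((hi 4 c4).add (hi 5 c5))))))]
  rw [intervalIntegral.integral_add (hi 1 c1) (((hi 2 c2).add ((hi 3 c3).add ((hi 4 c4).add (hi 5 c5)))))]
  rw [intervalIntegral.integral_add (hi 2 c2) (((hi 3 c3).add ((hi 4 c4).add (hi 5 c5))))]
  rw [intervalIntegral.integral_add (hi 3 c3) (((hi 4 c4).add (hi 5 c5)))]
  rw [intervalIntegral.integral_add (hi 4 c4) (hi 5 c5)]
  rw [h 0, h 1, h 2, h 3, h 4, h 5]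
  norm_num
  ring

lemma tri_prod (α β γ : ℝ) :
    ∫ p in {p : ℝ × ℝ | 0 ≤ p.1 ∧ 0 ≤ p.2 ∧ p.1 + p.2 ≤ 1},
      (5*p.1^3 - 5*p.1^2 + p.1) * (α + β*p.1 + γ*p.2) = 0 := by
  set f : ℝ × ℝ → ℝ := fun p => (5*p.1^3 - 5*p.1^2 + p.1) * (α + β*p.1 + γ*p.2) with hf_def
  set S : Set (ℝ × ℝ) := {p : ℝ × ℝ | 0 ≤ p.1 ∧ 0 ≤ p.2 ∧ p.1 + p.2 ≤ 1} with hS_def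
  have hf : Continuous f := by fun_prop
  have hSclosed : IsClosed S := by
    apply IsClosed.inter (isClosed_le continuous_const continuous_fst)
    exact IsClosed.inter (isClosed_le continuous_const continuous_snd)
      (isClosed_le (continuous_fst.add continuous_snd) continuous_const)
  have hSsub : S ⊆ Set.Icc (0,0) (1,1) := by
    rintro ⟨x,y⟩ ⟨h1,h2,h3⟩
    constructor <;> constructor <;> simp_all <;> linarith
  have hSc : IsCompact S := ((Metric.isBounded_Icc ((0,0):ℝ×ℝ) (1,1)).subset hSsub).isCompact_closure
    |>.of_isClosed_subset hSclosed subset_closure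
  have hSm : MeasurableSet S := hSclosed.measurableSet
  have hIntOn : IntegrableOn f S volume := hf.continuousOn.integrableOn_compact hSc
  rw [← integral_indicator hSm]
  have hInd : Integrable (S.indicator f) volume := (integrable_indicator_iff hSm).2 hIntOn
  rw [Measure.volume_eq_prod] at hInd ⊢
  rw [integral_prod _ hInd]
  have key : ∀ x : ℝ, (∫ y, S.indicator f (x, y)) =
      Set.indicator (Set.Icc (0:ℝ) 1) (fun x => ∫ y in (0:ℝ)..(1-x), f (x, y)) x := by
    intro x
    by_cases hx : x ∈ Set.Icc (0:ℝ) 1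
    · obtain ⟨hx0, hx1⟩ := hx
      have h1 : (fun y => S.indicator f (x, y)) =
          (Set.Icc (0:ℝ) (1-x)).indicator (fun y => f (x, y)) := by
        funext y
        simp only [Set.indicator_apply, hS_def, Set.mem_setOf_eq, Set.mem_Icc]
        refine if_congr ?_ rfl rfl
        constructor
        · rintro ⟨_, h2, h3⟩; exact ⟨h2, by linarith⟩
        · rintro ⟨h2, h3⟩; exact ⟨hx0, h2, by linarith⟩
      rw [h1, integral_indicator measurableSet_Icc, integral_Icc_eq_integral_Ioc,
        ← intervalIntegral.integral_of_le (by linarith : (0:ℝ) ≤ 1 - x),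
        Set.indicator_of_mem (Set.mem_Icc.2 ⟨hx0, hx1⟩)]
    · rw [Set.indicator_of_notMem hx]
      have h0 : ∀ y : ℝ, S.indicator f (x, y) = 0 := by
        intro y
        apply Set.indicator_of_notMem
        simp only [hS_def, Set.mem_setOf_eq, Set.mem_Icc] at *
        intro h; push_neg at hx
        rcases h with ⟨h1, h2, h3⟩
        exact absurd (by linarith : x ≤ 1) (by intro _; exact absurd (hx h1) (by linarith))
      simp [h0]
  rw [integral_congr_ae (Filter.Eventually.of_forall key)]
  rw [integral_indicator measurableSet_Icc, integral_Icc_eq_integral_Ioc,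
    ← intervalIntegral.integral_of_le (by norm_num : (0:ℝ) ≤ 1)]
  have inner : ∀ x : ℝ, (∫ y in (0:ℝ)..(1-x), f (x, y)) =
      0 + (α + γ/2)*x + (-6*α + β - 7*γ/2)*x^2 + (10*α - 6*β + 8*γ)*x^3
        + (-5*α + 10*β - 15*γ/2)*x^4 + (-5*β + 5*γ/2)*x^5 := by
    intro x
    have h1 : (fun y => f (x, y)) =
        fun y => ((5*x^3 - 5*x^2 + x) * (α + β*x)) + ((5*x^3 - 5*x^2 + x)*γ) * y := by
      funext y; simp only [hf_def]; ring
    rw [h1, lin_int]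
    ring
  rw [intervalIntegral.integral_congr (fun x _ => inner x), poly01]
  ring

lemma hauspi2 : (μH[2] : Measure (Fin 2 → ℝ)) = volume := by
  have h := MeasureTheory.hausdorffMeasure_pi_real (ι := Fin 2)
  simpa using h

lemma haus2 : ∃ c : ℝ≥0∞,
    (μH[2] : Measure (EuclideanSpace ℝ (Fin 2))) = c • (volume : Measure (EuclideanSpace ℝ (Fin 2))) := by
  have hfin : IsFiniteMeasureOnCompacts (μH[2] : Measure (EuclideanSpace ℝ (Fin 2))) := by
    constructor
    intro K hK
    have hal := (PiLp.antilipschitzWith_ofLp 2 (fun _ : Fin 2 => ℝ)).le_hausdorffMeasure_image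
      (by norm_num : (0:ℝ) ≤ 2) K
    have hKc : IsCompact ((WithLp.equiv 2 (Fin 2 → ℝ)) '' K) := hK.image (PiLp.continuous_ofLp _ _)
    have hv : μH[2] ((WithLp.equiv 2 (Fin 2 → ℝ)) '' K) < ⊤ := by
      rw [hauspi2]; exact hKc.measure_lt_top
    calc μH[2] K ≤ _ * μH[2] ((WithLp.equiv 2 (Fin 2 → ℝ)) '' K) := hal
      _ < ⊤ := ENNReal.mul_lt_top (ENNReal.rpow_lt_top_of_nonneg (by norm_num) ENNReal.coe_ne_top) hv
  refine ⟨((μH[2] : Measure (EuclideanSpace ℝ (Fin 2))).addHaarScalarFactor volume : ℝ≥0∞), ?_⟩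
  have h := Measure.isAddLeftInvariant_eq_smul (μH[2] : Measure (EuclideanSpace ℝ (Fin 2))) volume
  refine h.trans (Measure.ext fun s hs => ?_)
  rw [Measure.coe_nnreal_smul_apply]
  rfl

lemma classify (d : Fin 3 →₀ ℕ) (h0 : d ≠ 0) (h1 : ∀ j, d ≠ Finsupp.single j 1) :
    2 ≤ d.sum fun _ n => n := by
  by_contra h; push_neg at h
  have hs : (d.sum fun _ n => n) ≤ 1 := by omega
  obtain ⟨j, hj⟩ : ∃ j, d j ≠ 0 := by
    by_contra hc; push_neg at hc
    exact h0 (Finsupp.ext fun j => hc j)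
  have hjs : j ∈ d.support := Finsupp.mem_support_iff.2 hj
  have hdj : d j ≤ d.sum fun _ n => n :=
    Finset.single_le_sum (fun k _ => Nat.zero_le _) hjs
  have hdj1 : d j = 1 := by omega
  apply h1 j
  ext k
  by_cases hk : k = j
  · subst hk; simp [hdj1]
  · simp only [Finsupp.single_apply, if_neg (Ne.symm hk)]
    by_contra hdk
    have hks : k ∈ d.support := Finsupp.mem_support_iff.2 hdk
    have hsub : ({j, k} : Finset (Fin 3)) ⊆ d.support := by
      intro t ht; simp at ht; rcases ht with rfl | rfl <;> assumption
    have : d j + d k ≤ d.sum fun _ n => n := by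
      rw [Finsupp.sum]
      calc d j + d k = ∑ t ∈ ({j,k} : Finset (Fin 3)), d t := by
            rw [Finset.sum_pair (Ne.symm hk)]
        _ ≤ _ := Finset.sum_le_sum_of_subset hsub
    omega

lemma affine_form (q : MvPolynomial (Fin 3) ℝ) (hq : q.totalDegree ≤ 1) :
    ∀ f : Fin 3 → ℝ, eval f q = q.coeff 0 + ∑ j, q.coeff (Finsupp.single j 1) * f j := by
  have hq' : q = C (q.coeff 0) + ∑ j, C (q.coeff (Finsupp.single j 1)) * X j := by
    ext d
    rw [coeff_add, coeff_C]
    rw [coeff_sum]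
    simp_rw [coeff_C_mul, coeff_X']
    by_cases hd0 : d = 0
    · subst hd0
      simp [Finsupp.single_eq_zero]
    · by_cases hd1 : ∃ j, d = Finsupp.single j 1
      · obtain ⟨j, rfl⟩ := hd1
        rw [if_neg (fun h => hd0 h.symm)]
        rw [Finset.sum_eq_single j]
        · simp
        · intro k _ hkj
          rw [if_neg, mul_zero]
          simp [Finsupp.single_eq_single_iff]
          exact hkj
        · simp
      · push_neg at hd1
        have h2 : 2 ≤ d.sum fun _ n => n := classify d hd0 hd1
        have hz : q.coeff d = 0 := by
          apply coeff_eq_zero_of_totalDegree_lt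
          have h2' : 2 ≤ ∑ i ∈ d.support, d i := by rwa [Finsupp.sum] at h2
          omega
        rw [hz, if_neg (fun h => hd0 h.symm), Finset.sum_eq_zero, zero_add]
        intro k _
        rw [if_neg (fun h => hd1 k h.symm), mul_zero]
  intro f
  conv_lhs => rw [hq']
  simp [eval_C, eval_X, map_sum]

lemma tri_euc (α β γ : ℝ) :
    ∫ y in {y : EuclideanSpace ℝ (Fin 2) | 0 ≤ y 0 ∧ 0 ≤ y 1 ∧ y 0 + y 1 ≤ 1},
      (5*(y 0)^3 - 5*(y 0)^2 + y 0) * (α + β*(y 0) + γ*(y 1)) = 0 := by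
  set T : EuclideanSpace ℝ (Fin 2) ≃ᵐ ℝ × ℝ :=
    (MeasurableEquiv.toLp 2 (Fin 2 → ℝ)).symm.trans (MeasurableEquiv.piFinTwo fun _ => ℝ) with hT_def
  have hTmp : MeasurePreserving T volume volume :=
    (volume_preserving_piFinTwo fun _ => ℝ).comp
      (EuclideanSpace.volume_preserving_symm_measurableEquiv_toLp (Fin 2))
  have hTapp : ∀ y : EuclideanSpace ℝ (Fin 2), T y = (y 0, y 1) := fun y => rfl
  have hsymm : ∀ p : ℝ × ℝ, (T.symm p) 0 = p.1 ∧ (T.symm p) 1 = p.2 := by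
    intro p
    have h := hTapp (T.symm p)
    rw [T.apply_symm_apply] at h
    exact ⟨(congrArg Prod.fst h).symm, (congrArg Prod.snd h).symm⟩
  set S₀ : Set (EuclideanSpace ℝ (Fin 2)) := {y | 0 ≤ y 0 ∧ 0 ≤ y 1 ∧ y 0 + y 1 ≤ 1} with hS₀
  set S' : Set (ℝ × ℝ) := {p | 0 ≤ p.1 ∧ 0 ≤ p.2 ∧ p.1 + p.2 ≤ 1} with hS'
  have himg : T.symm '' S' = S₀ := by
    ext y; constructor
    · rintro ⟨p, hp, rfl⟩
      obtain ⟨h1, h2⟩ := hsymm p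
      simp only [hS₀, Set.mem_setOf_eq, h1, h2]
      exact hp
    · intro hy
      refine ⟨T y, ?_, T.symm_apply_apply y⟩
      rw [hS', Set.mem_setOf_eq, hTapp y]
      exact hy
  have hmp : MeasurePreserving T.symm volume volume := hTmp.symm T
  rw [← himg, hmp.setIntegral_image_emb T.symm.measurableEmbedding]
  have heq : ∀ p : ℝ × ℝ, (5*((T.symm p) 0)^3 - 5*((T.symm p) 0)^2 + (T.symm p) 0) *
      (α + β*((T.symm p) 0) + γ*((T.symm p) 1)) =
      (5*p.1^3 - 5*p.1^2 + p.1) * (α + β*p.1 + γ*p.2) := by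
    intro p; rw [(hsymm p).1, (hsymm p).2]
  rw [setIntegral_congr_fun (by
      apply IsClosed.measurableSet
      apply IsClosed.inter (isClosed_le continuous_const continuous_fst)
      exact IsClosed.inter (isClosed_le continuous_const continuous_snd)
        (isClosed_le (continuous_fst.add continuous_snd) continuous_const))
    (fun p _ => heq p)]
  exact tri_prod α β γ

def others (F : Fin 4) : Fin 3 → Fin 4 :=
  if F = 0 then ![1,2,3] else if F = 1 then ![0,2,3] else if F = 2 then ![0,1,3] else ![0,1,2]

def epick (F i : Fin 4) : Fin 3 → Fin 4 :=
  if others F 1 = i then others F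
  else if others F 0 = i then ![others F 1, others F 0, others F 2]
  else ![others F 0, others F 2, others F 1]

lemma epick_spec : ∀ F i : Fin 4, Function.Injective (epick F i) ∧
    (∀ k, epick F i k ≠ F) ∧ (∀ j, j ≠ F → ∃ k, epick F i k = j) ∧
    (i ≠ F → epick F i 1 = i) := by decide

set_option maxHeartbeats 3200000 in
/-- the cubic bubbles `φᵢ = 5λᵢ³ − 5λᵢ² + λᵢ` have vanishing
first-order moments on every facet of the tetrahedron. -/
theorem stmt0 (a : Fin 4 → E3) (hind : AffineIndependent ℝ a)
    (lam : Fin 4 → MvPolynomial (Fin 3) ℝ)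
    (hdeg : ∀ i, (lam i).totalDegree ≤ 1)
    (hval : ∀ i j, evalP (a j) (lam i) = if i = j then 1 else 0)
    (i : Fin 4) :
    ∀ (F : Fin 4) (q : MvPolynomial (Fin 3) ℝ), q.totalDegree ≤ 1 →
      ∫ x in face a F,
        evalP x (5 * lam i ^ 3 - 5 * lam i ^ 2 + lam i) * evalP x q ∂(μH[2]) = 0 := by
  intro F q hq
  -- pick an enumeration of the three face vertices, with `a i` second if `i ≠ F`
  obtain ⟨einj, heF, hesurj, hei⟩ := epick_spec F i
  set e : Fin 3 → Fin 4 := epick F i with he_def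
  set b : Fin 3 → E3 := a ∘ e with hb_def
  have hbv : ∀ k, b k = a (e k) := fun k => by rw [hb_def]; rfl
  have hbind : AffineIndependent ℝ b := by
    rw [hb_def]; exact hind.comp_embedding ⟨e, einj⟩
  have hli0 := (affineIndependent_iff_linearIndependent_vsub ℝ b (0 : Fin 3)).1 hbind
  set v : Fin 2 → E3 := fun k => b (Fin.succ k) - b 0 with hv_def
  have hvs : ∀ k, v k = b (Fin.succ k) - b 0 := fun k => by rw [hv_def]
  have hli : LinearIndependent ℝ v := by
    rw [hv_def]
    have hinj2 : Function.Injective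
        (fun k : Fin 2 => (⟨Fin.succ k, Fin.succ_ne_zero k⟩ : {x : Fin 3 // x ≠ 0})) := by
      intro k k' h
      exact Fin.succ_injective _ (congrArg Subtype.val h)
    have hcomp := hli0.comp _ hinj2
    exact hcomp
  set K : Submodule ℝ E3 := Submodule.span ℝ (Set.range v) with hK_def
  have hvK : ∀ k, v k ∈ K := fun k => by rw [hK_def]; exact Submodule.subset_span ⟨k, rfl⟩
  have hrank : Module.finrank ℝ K = 2 := by
    rw [hK_def, finrank_span_eq_card hli, Fintype.card_fin]
  set B := (stdOrthonormalBasis ℝ K).reindex (finCongr hrank) with hB_def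
  set L := B.repr.symm with hL_def
  set g : EuclideanSpace ℝ (Fin 2) → E3 := fun y => b 0 + ((L y : K) : E3) with hg_def
  have hgiso : Isometry g := by
    apply Isometry.of_dist_eq
    intro y y'
    rw [hg_def]
    calc dist (b 0 + ((L y : K) : E3)) (b 0 + ((L y' : K) : E3))
        = dist ((L y : K) : E3) ((L y' : K) : E3) := dist_add_left _ _ _
      _ = dist (L y) (L y') := (Subtype.dist_eq _ _).symm
      _ = dist y y' := L.dist_map y y'
  set w : Fin 2 → EuclideanSpace ℝ (Fin 2) := fun k => L.symm ⟨v k, hvK k⟩ with hw_def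
  set M : EuclideanSpace ℝ (Fin 2) →ₗ[ℝ] EuclideanSpace ℝ (Fin 2) :=
    { toFun := fun y => y 0 • w 0 + y 1 • w 1
      map_add' := by
        intro y y'
        simp only [PiLp.add_apply, add_smul]
        abel
      map_smul' := by
        intro c y
        simp only [PiLp.smul_apply, smul_eq_mul, RingHom.id_apply, smul_add, smul_smul] } with hM_def
  have hMapp : ∀ y, M y = y 0 • w 0 + y 1 • w 1 := fun y => by rw [hM_def]; rfl
  set T := LinearMap.toContinuousLinearMap M with hT_def
  have hTapp : ∀ y, T y = M y := fun y => by rw [hT_def]; rfl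
  set A : EuclideanSpace ℝ (Fin 2) → E3 := fun y => g (T y) with hA_def
  have hliw : LinearIndependent ℝ w := by
    have hlivK : LinearIndependent ℝ (fun k : Fin 2 => (⟨v k, hvK k⟩ : K)) := by
      apply LinearIndependent.of_comp K.subtype
      exact hli
    rw [hw_def]
    exact hlivK.map' L.symm.toLinearEquiv.toLinearMap
      (LinearMap.ker_eq_bot_of_injective L.symm.toLinearEquiv.injective)
  have hMinj : Function.Injective (T : EuclideanSpace ℝ (Fin 2) → EuclideanSpace ℝ (Fin 2)) := by
    intro y y' h
    rw [hTapp, hTapp, hMapp, hMapp] at h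
    have h3 : (y 0 • w 0 + y 1 • w 1) - (y' 0 • w 0 + y' 1 • w 1) = 0 := sub_eq_zero.2 h
    have hcoef := Fintype.linearIndependent_iff.1 hliw ![y 0 - y' 0, y 1 - y' 1] (by
      rw [Fin.sum_univ_two]
      simp only [Matrix.cons_val_zero, Matrix.cons_val_one, Matrix.head_cons]
      rw [sub_smul, sub_smul]
      first
      | linear_combination (norm := module) h3
      | (abel_nf at h3 ⊢; exact h3))
    have h0 := hcoef 0
    have h1 := hcoef 1
    simp only [Matrix.cons_val_zero, Matrix.cons_val_one, Matrix.head_cons] at h0 h1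
    ext jj
    fin_cases jj
    · exact sub_eq_zero.1 h0
    · exact sub_eq_zero.1 h1
  have hA : ∀ y, A y = b 0 + (y 0 • v 0 + y 1 • v 1) := by
    intro y
    rw [hA_def]
    simp only []
    rw [hg_def]
    simp only []
    congr 1
    rw [hTapp, hMapp, map_add, _root_.map_smul, _root_.map_smul]
    simp only [hw_def]
    rw [L.apply_symm_apply, L.apply_symm_apply]
    push_cast
    rfl
  have hAco : ∀ y j, A y j = b 0 j + (y 0 * v 0 j + y 1 * v 1 j) := by
    intro y j
    rw [hA]
    simp [PiLp.add_apply, PiLp.smul_apply, smul_eq_mul]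
  set pts : Fin 3 → EuclideanSpace ℝ (Fin 2) :=
    ![0, EuclideanSpace.single 0 1, EuclideanSpace.single 1 1] with hpts_def
  have hpt0 : ∀ jj : Fin 2, (pts 0) jj = 0 := by
    intro jj; rw [hpts_def]; simp
  have hpt10 : (pts 1) 0 = 1 := by rw [hpts_def]; simp [EuclideanSpace.single_apply]
  have hpt11 : (pts 1) 1 = 0 := by rw [hpts_def]; simp [EuclideanSpace.single_apply]
  have hpt20 : (pts 2) 0 = 0 := by rw [hpts_def]; simp [EuclideanSpace.single_apply]
  have hpt21 : (pts 2) 1 = 1 := by rw [hpts_def]; simp [EuclideanSpace.single_apply]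
  have hv0eq : v 0 = b 1 - b 0 := hvs 0
  have hv1eq : v 1 = b 2 - b 0 := hvs 1
  have hAp0 : A (pts 0) = b 0 := by
    rw [hA, hpt0, hpt0]; simp
  have hAp1 : A (pts 1) = b 1 := by
    rw [hA, hpt10, hpt11, hv0eq, one_smul, zero_smul, add_zero]
    abel
  have hAp2 : A (pts 2) = b 2 := by
    rw [hA, hpt20, hpt21, hv1eq, one_smul, zero_smul, zero_add]
    abel
  set S₀ : Set (EuclideanSpace ℝ (Fin 2)) := {y | 0 ≤ y 0 ∧ 0 ≤ y 1 ∧ y 0 + y 1 ≤ 1} with hS₀_def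
  have hcont0 : Continuous fun y : EuclideanSpace ℝ (Fin 2) => y 0 :=
    (continuous_apply (0 : Fin 2)).comp (PiLp.continuous_ofLp _ _)
  have hcont1 : Continuous fun y : EuclideanSpace ℝ (Fin 2) => y 1 :=
    (continuous_apply (1 : Fin 2)).comp (PiLp.continuous_ofLp _ _)
  have hS₀closed : IsClosed S₀ := by
    rw [hS₀_def]
    exact (isClosed_le continuous_const hcont0).inter
      ((isClosed_le continuous_const hcont1).inter
        (isClosed_le (hcont0.add hcont1) continuous_const))
  have hS₀m : MeasurableSet S₀ := hS₀closed.measurableSet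
  have hhull : convexHull ℝ ({pts 0, pts 1, pts 2} : Set (EuclideanSpace ℝ (Fin 2))) = S₀ := by
    apply le_antisymm
    · apply convexHull_min
      · intro x hx
        rcases hx with rfl | rfl | rfl
        · simp only [hS₀_def, Set.mem_setOf_eq, hpt0]; norm_num
        · simp only [hS₀_def, Set.mem_setOf_eq, hpt10, hpt11]; norm_num
        · simp only [hS₀_def, Set.mem_setOf_eq, hpt20, hpt21]; norm_num
      · rw [hS₀_def]
        intro x hx y hy s t hs ht hst
        simp only [Set.mem_setOf_eq, PiLp.add_apply, PiLp.smul_apply, smul_eq_mul] at *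
        obtain ⟨hx0, hx1, hx2⟩ := hx
        obtain ⟨hy0, hy1, hy2⟩ := hy
        refine ⟨by positivity, by positivity, by nlinarith⟩
    · intro y hy
      rw [hS₀_def] at hy
      obtain ⟨hy0, hy1, hy2⟩ := hy
      have hmem := Finset.centerMass_mem_convexHull (Finset.univ : Finset (Fin 3))
        (w := ![1 - y 0 - y 1, y 0, y 1]) (z := pts)
        (s := ({pts 0, pts 1, pts 2} : Set (EuclideanSpace ℝ (Fin 2))))
        (by
          intro k _
          fin_cases k <;> simp <;> linarith)
        (by
          rw [Fin.sum_univ_three]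
          simp only [Matrix.cons_val_zero, Matrix.cons_val_one, Matrix.head_cons,
            Matrix.cons_val_two, Matrix.tail_cons]
          linarith)
        (by
          intro k _
          fin_cases k
          · exact Set.mem_insert _ _
          · exact Set.mem_insert_of_mem _ (Set.mem_insert _ _)
          · exact Set.mem_insert_of_mem _ (Set.mem_insert_of_mem _ rfl))
      have hcm : (Finset.univ : Finset (Fin 3)).centerMass ![1 - y 0 - y 1, y 0, y 1] pts = y := by
        rw [Finset.centerMass_eq_of_sum_1]
        · rw [Fin.sum_univ_three]
          ext jj
          simp only [Matrix.cons_val_zero, Matrix.cons_val_one, Matrix.head_cons,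
            Matrix.cons_val_two, Matrix.tail_cons, PiLp.add_apply, PiLp.smul_apply, smul_eq_mul]
          fin_cases jj
          · simp only [Fin.zero_eta, hpt0, hpt10, hpt20]; ring
          · simp only [Fin.mk_one, hpt0, hpt11, hpt21]; ring
        · rw [Fin.sum_univ_three]
          simp only [Matrix.cons_val_zero, Matrix.cons_val_one, Matrix.head_cons,
            Matrix.cons_val_two, Matrix.tail_cons]
          ring
      rwa [hcm] at hmem
  -- the face as the image of the standard triangle
  have hset : a '' {j | j ≠ F} = {b 0, b 1, b 2} := by
    ext x
    simp only [Set.mem_image, Set.mem_setOf_eq, Set.mem_insert_iff, Set.mem_singleton_iff]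
    constructor
    · rintro ⟨j, hjF, rfl⟩
      obtain ⟨k, rfl⟩ := hesurj j hjF
      fin_cases k
      · left; exact (hbv 0).symm
      · right; left; exact (hbv 1).symm
      · right; right; exact (hbv 2).symm
    · rintro (rfl | rfl | rfl)
      · exact ⟨e 0, heF 0, (hbv 0).symm⟩
      · exact ⟨e 1, heF 1, (hbv 1).symm⟩
      · exact ⟨e 2, heF 2, (hbv 2).symm⟩
  -- A as an affine map
  set Mlin : EuclideanSpace ℝ (Fin 2) →ₗ[ℝ] E3 :=
    K.subtype.comp (L.toLinearEquiv.toLinearMap.comp M) with hMlin_def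
  have hMlinapp : ∀ y, Mlin y = ((L (M y) : K) : E3) := by
    intro y; rw [hMlin_def]; rfl
  have hAMlin : ∀ y, A y = b 0 + Mlin y := by
    intro y
    rw [hA_def]
    simp only []
    rw [hg_def]
    simp only []
    rw [hMlinapp, hTapp]
  set Aaff : EuclideanSpace ℝ (Fin 2) →ᵃ[ℝ] E3 :=
    { toFun := A
      linear := Mlin
      map_vadd' := by
        intro pt vv
        simp only [vadd_eq_add]
        rw [hAMlin, hAMlin, map_add]
        abel } with hAaff_def
  have hAaffco : (Aaff : EuclideanSpace ℝ (Fin 2) → E3) = A := by rw [hAaff_def]; rfl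
  have hptsimg : A '' {pts 0, pts 1, pts 2} = {b 0, b 1, b 2} := by
    rw [Set.image_insert_eq, Set.image_insert_eq, Set.image_singleton, hAp0, hAp1, hAp2]
  have hfaceA : face a F = A '' S₀ := by
    rw [show face a F = convexHull ℝ (a '' {j | j ≠ F}) from rfl, hset, ← hhull, ← hAaffco,
      AffineMap.image_convexHull, hAaffco, hptsimg]
  -- compactness
  have hS₀compact : IsCompact S₀ := by
    rw [← hhull]
    exact (((Set.finite_singleton (pts 2)).insert (pts 1)).insert (pts 0)).isCompact_convexHull ℝ
  have hTcont : Continuous (T : EuclideanSpace ℝ (Fin 2) → EuclideanSpace ℝ (Fin 2)) := T.continuous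
  have hTS₀compact : IsCompact ((T : EuclideanSpace ℝ (Fin 2) → EuclideanSpace ℝ (Fin 2)) '' S₀) :=
    hS₀compact.image hTcont
  have hgTS₀meas : MeasurableSet (g '' ((T : EuclideanSpace ℝ (Fin 2) → EuclideanSpace ℝ (Fin 2)) '' S₀)) :=
    ((hTS₀compact.image hgiso.continuous).isClosed).measurableSet
  have himg : A '' S₀ = g '' ((T : EuclideanSpace ℝ (Fin 2) → EuclideanSpace ℝ (Fin 2)) '' S₀) := by
    rw [← Set.image_comp]
    apply Set.image_congr
    intro y _
    rw [hA_def]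
    rfl
  -- the integrand
  set f : E3 → ℝ := fun x => evalP x (5 * lam i ^ 3 - 5 * lam i ^ 2 + lam i) * evalP x q with hf_def
  show ∫ x in face a F, f x ∂(μH[2]) = 0
  rw [hfaceA, himg]
  -- step 1 : pull back along the isometry g
  have hmap := hgiso.map_hausdorffMeasure (d := 2) (Or.inl (by norm_num))
  have step1 : ∫ x in g '' ((T : EuclideanSpace ℝ (Fin 2) → EuclideanSpace ℝ (Fin 2)) '' S₀), f x ∂(μH[2]) =
      ∫ y in (T : EuclideanSpace ℝ (Fin 2) → EuclideanSpace ℝ (Fin 2)) '' S₀, f (g y)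
        ∂(μH[2] : Measure (EuclideanSpace ℝ (Fin 2))) := by
    calc ∫ x in g '' ((T : EuclideanSpace ℝ (Fin 2) → EuclideanSpace ℝ (Fin 2)) '' S₀), f x ∂(μH[2])
        = ∫ x in g '' ((T : EuclideanSpace ℝ (Fin 2) → EuclideanSpace ℝ (Fin 2)) '' S₀), f x
            ∂((μH[2] : Measure E3).restrict (Set.range g)) := by
          rw [Measure.restrict_restrict hgTS₀meas,
            Set.inter_eq_self_of_subset_left (Set.image_subset_range _ _)]
      _ = ∫ x in g '' ((T : EuclideanSpace ℝ (Fin 2) → EuclideanSpace ℝ (Fin 2)) '' S₀), f x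
            ∂(Measure.map g μH[2]) := by rw [hmap]
      _ = ∫ y in g ⁻¹' (g '' ((T : EuclideanSpace ℝ (Fin 2) → EuclideanSpace ℝ (Fin 2)) '' S₀)), f (g y)
            ∂(μH[2] : Measure (EuclideanSpace ℝ (Fin 2))) :=
          (hgiso.isClosedEmbedding.measurableEmbedding.setIntegral_map f _)
      _ = _ := by rw [Set.preimage_image_eq _ hgiso.injective]
  rw [step1]
  -- step 2 : replace the Hausdorff measure by a multiple of Lebesgue
  obtain ⟨c, hc⟩ := haus2
  rw [hc, Measure.restrict_smul, integral_smul_measure]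
  -- step 3 : linear change of variables
  have step3 := integral_image_eq_integral_abs_det_fderiv_smul
    (volume : Measure (EuclideanSpace ℝ (Fin 2))) hS₀m
    (fun x _ => (T.hasFDerivAt).hasFDerivWithinAt) hMinj.injOn (fun y => f (g y))
  rw [step3]
  have hAgT : ∀ y, f (g ((T : EuclideanSpace ℝ (Fin 2) → EuclideanSpace ℝ (Fin 2)) y)) = f (A y) := by
    intro y; rw [hA_def]
  simp only [hAgT]
  rw [integral_smul]
  -- it suffices to show the Lebesgue integral over the standard triangle vanishes
  suffices h0 : ∫ y in S₀, f (A y) = 0 by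
    rw [h0]; simp
  -- evaluation of the polynomials along A
  have hφ : ∀ x : E3, evalP x (5 * lam i ^ 3 - 5 * lam i ^ 2 + lam i) =
      5*(evalP x (lam i))^3 - 5*(evalP x (lam i))^2 + evalP x (lam i) := by
    intro x
    simp only [evalP, map_sub, map_add, map_mul, map_pow, map_ofNat]
  have hsum : ∀ (r : Fin 3 → ℝ) (y : EuclideanSpace ℝ (Fin 2)),
      ∑ j, r j * A y j = (∑ j, r j * b 0 j) + (∑ j, r j * v 0 j) * y 0 + (∑ j, r j * v 1 j) * y 1 := by
    intro r y
    have hterm : ∀ j, r j * A y j = r j * b 0 j + ((r j * v 0 j) * y 0 + (r j * v 1 j) * y 1) := by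
      intro j; rw [hAco]; ring
    rw [Finset.sum_congr rfl fun j _ => hterm j, Finset.sum_add_distrib, Finset.sum_add_distrib,
      ← Finset.sum_mul, ← Finset.sum_mul]
    ring
  have hlamf := affine_form (lam i) (hdeg i)
  have hqf := affine_form q hq
  set aL : ℝ := (lam i).coeff 0 + ∑ j, (lam i).coeff (Finsupp.single j 1) * b 0 j with haL_def
  set bL : ℝ := ∑ j, (lam i).coeff (Finsupp.single j 1) * v 0 j with hbL_def
  set gL : ℝ := ∑ j, (lam i).coeff (Finsupp.single j 1) * v 1 j with hgL_def
  have hevalA : ∀ y, evalP (A y) (lam i) = aL + bL * y 0 + gL * y 1 := by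
    intro y
    calc evalP (A y) (lam i)
        = (lam i).coeff 0 + ∑ j, (lam i).coeff (Finsupp.single j 1) * A y j := hlamf _
      _ = _ := by rw [hsum, haL_def, hbL_def, hgL_def]; ring
  have hb0val : evalP (b 0) (lam i) = aL := by
    have h := hevalA (pts 0)
    rw [hAp0, hpt0, hpt0] at h
    rw [h]; ring
  have hb1val : evalP (b 1) (lam i) = aL + bL := by
    have h := hevalA (pts 1)
    rw [hAp1, hpt10, hpt11] at h
    rw [h]; ring
  have hb2val : evalP (b 2) (lam i) = aL + gL := by
    have h := hevalA (pts 2)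
    rw [hAp2, hpt20, hpt21] at h
    rw [h]; ring
  set aQ : ℝ := q.coeff 0 + ∑ j, q.coeff (Finsupp.single j 1) * b 0 j with haQ_def
  set bQ : ℝ := ∑ j, q.coeff (Finsupp.single j 1) * v 0 j with hbQ_def
  set gQ : ℝ := ∑ j, q.coeff (Finsupp.single j 1) * v 1 j with hgQ_def
  have hevalq : ∀ y, evalP (A y) q = aQ + bQ * y 0 + gQ * y 1 := by
    intro y
    calc evalP (A y) q
        = q.coeff 0 + ∑ j, q.coeff (Finsupp.single j 1) * A y j := hqf _
      _ = _ := by rw [hsum, haQ_def, hbQ_def, hgQ_def]; ring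
  by_cases hiF : i = F
  · -- the bubble vanishes identically on the opposite face
    have hz : ∀ k : Fin 3, evalP (b k) (lam i) = 0 := by
      intro k
      rw [hbv, hval, if_neg]
      intro h
      exact heF k (h ▸ hiF ▸ rfl)
    have hα0 : aL = 0 := by rw [← hb0val, hz 0]
    have hβ0 : bL = 0 := by
      have := hb1val; rw [hz 1] at this; linarith [hα0]
    have hγ0 : gL = 0 := by
      have := hb2val; rw [hz 2] at this; linarith [hα0]
    have hzero : ∀ y ∈ S₀, f (A y) = (0:ℝ) := by
      intro y _
      rw [hf_def]
      simp only []
      rw [hφ, hevalA, hα0, hβ0, hγ0]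
      ring
    rw [setIntegral_congr_fun hS₀m hzero]
    simp
  · -- the generic case: the bubble restricts to 5u³-5u²+u
    have he1 : e 1 = i := hei hiF
    have hne0 : e 0 ≠ i := by
      intro h
      have := einj (h.trans he1.symm)
      exact absurd this (by decide)
    have hne2 : e 2 ≠ i := by
      intro h
      have := einj (h.trans he1.symm)
      exact absurd this (by decide)
    have hb0z : evalP (b 0) (lam i) = 0 := by
      rw [hbv, hval, if_neg (fun hh => hne0 hh.symm)]
    have hb1o : evalP (b 1) (lam i) = 1 := by
      rw [hbv, he1, hval, if_pos rfl]
    have hb2z : evalP (b 2) (lam i) = 0 := by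
      rw [hbv, hval, if_neg (fun hh => hne2 hh.symm)]
    have hα0 : aL = 0 := by rw [← hb0val, hb0z]
    have hβ1 : bL = 1 := by
      have := hb1val; rw [hb1o] at this; linarith [hα0]
    have hγ0 : gL = 0 := by
      have := hb2val; rw [hb2z] at this; linarith [hα0]
    have hmatch : ∀ y ∈ S₀, f (A y) =
        (5*(y 0)^3 - 5*(y 0)^2 + y 0) * (aQ + bQ*(y 0) + gQ*(y 1)) := by
      intro y _
      rw [hf_def]
      simp only []
      rw [hφ, hevalA, hevalq, hα0, hβ1, hγ0]
      ring
    rw [setIntegral_congr_fun hS₀m hmatch]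
    exact tri_euc aQ bQ gQ
end
end

section
/- On the reference tetrahedron T, for each i ∈ {1,2,3,4} the polynomial φᵢ = −2λᵢ² + 4λᵢ − 2 + 3·∑_{j≠i} λⱼ² + 30·∏_{j≠i} λⱼ satisfies ∫_F φᵢ q ds = 0 for every face F of T and every polynomial q on F of degree at most 1. -/
open MeasureTheory MvPolynomial
open scoped RealInnerProductSpace

noncomputable section

open scoped ENNReal NNReal

abbrev E2 := EuclideanSpace ℝ (Fin 2)


lemma eval_affine {p : MvPolynomial (Fin 3) ℝ} (hp : p.totalDegree ≤ 1)
    (u v w : Fin 3 → ℝ) (s t : ℝ) :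
    MvPolynomial.eval (fun j => (1 - s - t) * u j + s * v j + t * w j) p
      = (1 - s - t) * MvPolynomial.eval u p + s * MvPolynomial.eval v p
        + t * MvPolynomial.eval w p := by
  rw [eval_eq', eval_eq', eval_eq', eval_eq', Finset.mul_sum, Finset.mul_sum, Finset.mul_sum,
    ← Finset.sum_add_distrib, ← Finset.sum_add_distrib]
  refine Finset.sum_congr rfl fun m hm => ?_
  have hdeg : (m.sum fun _ e => e) ≤ 1 :=
    le_trans (MvPolynomial.le_totalDegree hm) hp
  rw [Finsupp.sum_fintype _ _ (fun _ => rfl)] at hdeg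
  rw [Fin.sum_univ_three] at hdeg
  have h : (m 0 = 0 ∧ m 1 = 0 ∧ m 2 = 0) ∨ (m 0 = 1 ∧ m 1 = 0 ∧ m 2 = 0)
      ∨ (m 0 = 0 ∧ m 1 = 1 ∧ m 2 = 0) ∨ (m 0 = 0 ∧ m 1 = 0 ∧ m 2 = 1) := by omega
  rw [Fin.prod_univ_three, Fin.prod_univ_three, Fin.prod_univ_three, Fin.prod_univ_three]
  rcases h with ⟨h0,h1,h2⟩|⟨h0,h1,h2⟩|⟨h0,h1,h2⟩|⟨h0,h1,h2⟩ <;> rw [h0,h1,h2] <;>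
    simp <;> ring


instance E2_fin_on_compacts : IsFiniteMeasureOnCompacts (μH[2] : Measure E2) := by
  constructor
  intro K hK
  set e := WithLp.equiv 2 (Fin 2 → ℝ) with he
  have hanti := PiLp.antilipschitzWith_ofLp 2 (fun _ : Fin 2 => ℝ)
  have hlip : LipschitzWith ((Fintype.card (Fin 2) : NNReal) ^ ((1:ℝ≥0∞)/2).toReal) e.symm :=
    hanti.to_rightInverse e.apply_symm_apply
  have himg : K = e.symm '' (e '' K) := by
    rw [Set.image_image]; simp
  have hb := hlip.hausdorffMeasure_image_le (by norm_num : (0:ℝ) ≤ 2) (e '' K)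
  rw [← himg] at hb
  have hvol : (μH[2] : Measure (Fin 2 → ℝ)) (e '' K) = volume (e '' K) := by
    have := MeasureTheory.hausdorffMeasure_pi_real (ι := Fin 2)
    rw [show ((Fintype.card (Fin 2) : ℝ)) = 2 by simp] at this
    rw [this]
  have hcomp : IsCompact (e '' K) := hK.image (PiLp.lipschitzWith_ofLp 2 _).continuous
  calc μH[2] K ≤ _ := hb
    _ < ⊤ := by
        rw [hvol]
        exact ENNReal.mul_lt_top
          (ENNReal.rpow_lt_top_of_nonneg (by norm_num) ENNReal.coe_ne_top)
          hcomp.measure_lt_top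

lemma haus2_eq_smul :
    (μH[2] : Measure E2)
      = (((μH[2] : Measure E2).addHaarScalarFactor volume : ℝ≥0) : ℝ≥0∞)
        • (volume : Measure E2) :=
  Measure.isAddLeftInvariant_eq_smul _ _


def Tri : Set (ℝ × ℝ) := {p | 0 ≤ p.1 ∧ 0 ≤ p.2 ∧ p.1 + p.2 ≤ 1}

lemma isClosed_Tri : IsClosed Tri := by
  have h1 : IsClosed {p : ℝ × ℝ | 0 ≤ p.1} := isClosed_le continuous_const continuous_fst
  have h2 : IsClosed {p : ℝ × ℝ | 0 ≤ p.2} := isClosed_le continuous_const continuous_snd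
  have h3 : IsClosed {p : ℝ × ℝ | p.1 + p.2 ≤ 1} :=
    isClosed_le (continuous_fst.add continuous_snd) continuous_const
  have : Tri = ({p : ℝ × ℝ | 0 ≤ p.1} ∩ {p | 0 ≤ p.2}) ∩ {p | p.1 + p.2 ≤ 1} := by
    ext p; simp [Tri, and_assoc]
  rw [this]; exact (h1.inter h2).inter h3

lemma isCompact_Tri : IsCompact Tri := by
  have hsub : Tri ⊆ Set.Icc (0,0) (1,1) := by
    rintro ⟨x, y⟩ ⟨h1, h2, h3⟩
    constructor <;> constructor <;> simp_all <;> linarith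
  exact (isCompact_Icc).of_isClosed_subset isClosed_Tri hsub

lemma measurableSet_Tri : MeasurableSet Tri := isClosed_Tri.measurableSet

lemma tri_fubini (f : ℝ × ℝ → ℝ) (hc : Continuous f) :
    ∫ p in Tri, f p = ∫ x in (0:ℝ)..1, ∫ y in (0:ℝ)..(1-x), f (x, y) := by
  have hint : IntegrableOn f Tri volume :=
    hc.continuousOn.integrableOn_compact isCompact_Tri
  rw [← integral_indicator measurableSet_Tri]
  rw [Measure.volume_eq_prod]
  rw [integral_prod _ ((integrable_indicator_iff measurableSet_Tri).2
    (by rwa [Measure.volume_eq_prod] at hint))]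
  have key : ∀ x : ℝ, (∫ y, Tri.indicator f (x, y)) =
      (Set.Icc (0:ℝ) 1).indicator (fun x => ∫ y in (0:ℝ)..(1-x), f (x, y)) x := by
    intro x
    by_cases hx : x ∈ Set.Icc (0:ℝ) 1
    · rw [Set.indicator_of_mem hx]
      obtain ⟨hx0, hx1⟩ := hx
      have hpt : ∀ y : ℝ, Tri.indicator f (x, y) =
          (Set.Icc (0:ℝ) (1-x)).indicator (fun y => f (x, y)) y := by
        intro y
        by_cases hy : y ∈ Set.Icc (0:ℝ) (1-x)
        · rw [Set.indicator_of_mem hy, Set.indicator_of_mem]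
          exact ⟨hx0, hy.1, by linarith [hy.2]⟩
        · rw [Set.indicator_of_notMem hy, Set.indicator_of_notMem]
          intro hmem
          exact hy ⟨hmem.2.1, by linarith [hmem.2.2]⟩
      simp only [hpt]
      rw [integral_indicator measurableSet_Icc,
        MeasureTheory.integral_Icc_eq_integral_Ioc,
        ← intervalIntegral.integral_of_le (by linarith)]
    · rw [Set.indicator_of_notMem hx]
      have : ∀ y : ℝ, Tri.indicator f (x, y) = 0 := by
        intro y
        apply Set.indicator_of_notMem
        intro hmem
        exact hx ⟨hmem.1, by linarith [hmem.2.1, hmem.2.2]⟩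
      simp [this]
  simp only [key]
  rw [integral_indicator measurableSet_Icc,
    MeasureTheory.integral_Icc_eq_integral_Ioc,
    ← intervalIntegral.integral_of_le (by norm_num)]

lemma ipoly (u c0 c1 c2 c3 c4 c5 c6 : ℝ) :
    ∫ y in (0:ℝ)..u, (c0 + c1*y + c2*y^2 + c3*y^3 + c4*y^4 + c5*y^5 + c6*y^6)
      = c0*u + c1*u^2/2 + c2*u^3/3 + c3*u^4/4 + c4*u^5/5 + c5*u^6/6 + c6*u^7/7 := by
  have hmono : ∀ (n : ℕ) (c : ℝ), ∫ y in (0:ℝ)..u, c * y^n = c * u^(n+1)/(n+1) := by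
    intro n c
    rw [intervalIntegral.integral_const_mul, integral_pow]
    rw [zero_pow (Nat.succ_ne_zero n)]
    ring
  set cf : ℕ → ℝ := fun k => if k = 0 then c0 else if k = 1 then c1 else if k = 2 then c2
    else if k = 3 then c3 else if k = 4 then c4 else if k = 5 then c5 else c6 with hcf
  rw [intervalIntegral.integral_congr (g := fun y : ℝ => ∑ k ∈ Finset.range 7,
      cf k * y ^ k) (fun y _ => by
        simp [Finset.sum_range_succ, hcf] <;> ring)]
  rw [intervalIntegral.integral_finset_sum (f := fun k y => cf k * y ^ k) (fun k _ =>
    ((continuous_const.mul (continuous_pow k)).intervalIntegrable _ _))]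
  simp only [hmono]
  simp [Finset.sum_range_succ, hcf]
  ring

lemma tri1 (al be ga : ℝ) :
    ∫ p in Tri, ((-2) + 3*((1-p.1-p.2)^2 + p.1^2 + p.2^2) + 30*((1-p.1-p.2)*p.1*p.2))
      * ((1-p.1-p.2)*al + p.1*be + p.2*ga) = 0 := by
  rw [tri_fubini _ (by fun_prop)]
  have hin : ∀ x : ℝ, (∫ y in (0:ℝ)..(1-x), ((-2) + 3*((1-x-y)^2 + x^2 + y^2) + 30*((1-x-y)*x*y))
      * ((1-x-y)*al + x*be + y*ga)) =
      (0:ℝ) + ((1/2 : ℝ)*al + (1/2 : ℝ)*ga)*x + ((-7/2 : ℝ)*al + (1 : ℝ)*be + (-7/2 : ℝ)*ga)*x^2 + ((8 : ℝ)*al + (-6 : ℝ)*be + (8 : ℝ)*ga)*x^3 + ((-15/2 : ℝ)*al + (10 : ℝ)*be + (-15/2 : ℝ)*ga)*x^4 + ((5/2 : ℝ)*al + (-5 : ℝ)*be + (5/2 : ℝ)*ga)*x^5 + (0:ℝ)*x^6 := by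
    intro x
    rw [intervalIntegral.integral_congr (g := fun y : ℝ =>
      (((1 : ℝ)*al) + ((-7 : ℝ)*al + (1 : ℝ)*be)*x + ((12 : ℝ)*al + (-6 : ℝ)*be)*x^2 + ((-6 : ℝ)*al + (6 : ℝ)*be)*x^3) + (((-7 : ℝ)*al + (1 : ℝ)*ga) + ((48 : ℝ)*al + (-6 : ℝ)*be + (-6 : ℝ)*ga)*x + ((-72 : ℝ)*al + (36 : ℝ)*be + (6 : ℝ)*ga)*x^2 + ((30 : ℝ)*al + (-30 : ℝ)*be)*x^3)*y + (((12 : ℝ)*al + (-6 : ℝ)*ga) + ((-72 : ℝ)*al + (6 : ℝ)*be + (36 : ℝ)*ga)*x + ((60 : ℝ)*al + (-30 : ℝ)*be + (-30 : ℝ)*ga)*x^2)*y^2 + (((-6 : ℝ)*al + (6 : ℝ)*ga) + ((30 : ℝ)*al + (-30 : ℝ)*ga)*x)*y^3 + ((0:ℝ))*y^4 + ((0:ℝ))*y^5 + ((0:ℝ))*y^6) (fun y _ => by ring)]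
    rw [ipoly]; ring
  rw [intervalIntegral.integral_congr (g := fun x : ℝ =>
      (0:ℝ) + ((1/2 : ℝ)*al + (1/2 : ℝ)*ga)*x + ((-7/2 : ℝ)*al + (1 : ℝ)*be + (-7/2 : ℝ)*ga)*x^2 + ((8 : ℝ)*al + (-6 : ℝ)*be + (8 : ℝ)*ga)*x^3 + ((-15/2 : ℝ)*al + (10 : ℝ)*be + (-15/2 : ℝ)*ga)*x^4 + ((5/2 : ℝ)*al + (-5 : ℝ)*be + (5/2 : ℝ)*ga)*x^5 + (0:ℝ)*x^6) (fun x _ => hin x)]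
  rw [ipoly]; ring

lemma tri2 (al be ga : ℝ) :
    ∫ p in Tri, ((-2)*(1-p.1-p.2)^2 + 4*(1-p.1-p.2) - 2 + 3*(p.1^2 + p.2^2))
      * ((1-p.1-p.2)*al + p.1*be + p.2*ga) = 0 := by
  rw [tri_fubini _ (by fun_prop)]
  have hin : ∀ x : ℝ, (∫ y in (0:ℝ)..(1-x), ((-2)*(1-x-y)^2 + 4*(1-x-y) - 2 + 3*(x^2 + y^2))
      * ((1-x-y)*al + x*be + y*ga)) =
      ((1/12 : ℝ)*al + (1/4 : ℝ)*ga) + ((-1 : ℝ)*al + (1/3 : ℝ)*be + (-7/3 : ℝ)*ga)*x + ((3 : ℝ)*al + (-3 : ℝ)*be + (6 : ℝ)*ga)*x^2 + ((-10/3 : ℝ)*al + (6 : ℝ)*be + (-6 : ℝ)*ga)*x^3 + ((5/4 : ℝ)*al + (-10/3 : ℝ)*be + (25/12 : ℝ)*ga)*x^4 + (0:ℝ)*x^5 + (0:ℝ)*x^6 := by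
    intro x
    rw [intervalIntegral.integral_congr (g := fun y : ℝ =>
      ((0:ℝ) + (0:ℝ)*x + ((1 : ℝ)*al)*x^2 + ((-1 : ℝ)*al + (1 : ℝ)*be)*x^3) + ((0:ℝ) + ((-4 : ℝ)*al)*x + ((3 : ℝ)*al + (-4 : ℝ)*be + (1 : ℝ)*ga)*x^2)*y + (((1 : ℝ)*al) + ((3 : ℝ)*al + (1 : ℝ)*be + (-4 : ℝ)*ga)*x)*y^2 + (((-1 : ℝ)*al + (1 : ℝ)*ga))*y^3 + ((0:ℝ))*y^4 + ((0:ℝ))*y^5 + ((0:ℝ))*y^6) (fun y _ => by ring)]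
    rw [ipoly]; ring
  rw [intervalIntegral.integral_congr (g := fun x : ℝ =>
      ((1/12 : ℝ)*al + (1/4 : ℝ)*ga) + ((-1 : ℝ)*al + (1/3 : ℝ)*be + (-7/3 : ℝ)*ga)*x + ((3 : ℝ)*al + (-3 : ℝ)*be + (6 : ℝ)*ga)*x^2 + ((-10/3 : ℝ)*al + (6 : ℝ)*be + (-6 : ℝ)*ga)*x^3 + ((5/4 : ℝ)*al + (-10/3 : ℝ)*be + (25/12 : ℝ)*ga)*x^4 + (0:ℝ)*x^5 + (0:ℝ)*x^6) (fun x _ => hin x)]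
  rw [ipoly]; ring

def Theta : E2 → ℝ × ℝ := fun y => (y 0, y 1)

lemma Theta_eq : Theta = ⇑((MeasurableEquiv.toLp 2 (Fin 2 → ℝ)).symm.trans
    (MeasurableEquiv.finTwoArrow)) := rfl

lemma Theta_mp : MeasurePreserving Theta volume volume :=
  (volume_preserving_finTwoArrow ℝ).comp
    (EuclideanSpace.volume_preserving_symm_measurableEquiv_toLp (Fin 2))

lemma Theta_emb : MeasurableEmbedding Theta := by
  rw [Theta_eq]; exact MeasurableEquiv.measurableEmbedding _

set_option maxHeartbeats 2000000 in
lemma reduce (a : Fin 4 → E3) (hind : AffineIndependent ℝ a)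
    (v : Fin 3 → Fin 4) (hv : Function.Injective v) (F : Fin 4)
    (hrange : ∀ j : Fin 4, j ≠ F ↔ (j = v 0 ∨ j = v 1 ∨ j = v 2))
    (g : E3 → ℝ) (G : ℝ × ℝ → ℝ)
    (hG : ∀ s t : ℝ, g ((1 - s - t) • a (v 0) + s • a (v 1) + t • a (v 2)) = G (s, t))
    (hTri : ∫ p in Tri, G p = 0) :
    ∫ x in face a F, g x ∂(μH[2]) = 0 := by
  classical
  -- linear independence of edge vectors
  set b : Fin 2 → E3 := fun k => a (v k.succ) - a (v 0) with hb
  have hsub : AffineIndependent ℝ (a ∘ v) := hind.comp_embedding ⟨v, hv⟩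
  have hli0 := (affineIndependent_iff_linearIndependent_vsub ℝ (a ∘ v) 0).mp hsub
  have hli : LinearIndependent ℝ b := by
    have hemb : Function.Injective
        (fun k : Fin 2 => (⟨k.succ, Fin.succ_ne_zero k⟩ : {x : Fin 3 // x ≠ 0})) := by
      intro x y hxy
      exact Fin.succ_injective _ (by simpa using congrArg Subtype.val hxy)
    have h2 := hli0.comp _ hemb
    convert h2 using 1 <;> rfl
  -- orthonormal basis of the span
  set V : Submodule ℝ E3 := Submodule.span ℝ (Set.range b) with hV
  have hrank : Module.finrank ℝ V = 2 := by
    rw [hV, finrank_span_eq_card hli]; simp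
  set B : OrthonormalBasis (Fin 2) ℝ V :=
    (stdOrthonormalBasis ℝ V).reindex (finCongr hrank) with hB
  set ι : E2 → E3 := fun y => a (v 0) + ((B.repr.symm y : V) : E3) with hι_def
  have hι : Isometry ι := by
    have h1 : Isometry (fun x : E3 => a (v 0) + x) :=
      Isometry.of_dist_eq fun x y => dist_add_left _ _ _
    have h2 : Isometry (fun y : E2 => ((B.repr.symm y : V) : E3)) :=
      (Submodule.subtypeₗᵢ V).isometry.comp B.repr.symm.isometry
    exact h1.comp h2
  have hinj : Function.Injective ι := hι.injective
  -- the linear parametrization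
  set bb : Fin 2 → V := fun k => ⟨b k, Submodule.subset_span (Set.mem_range_self k)⟩ with hbb
  set W : E2 →ₗ[ℝ] V :=
    { toFun := fun y => y 0 • bb 0 + y 1 • bb 1
      map_add' := by
        intro p q
        simp only [PiLp.add_apply]
        module
      map_smul' := by
        intro c p
        simp only [PiLp.smul_apply, smul_eq_mul, RingHom.id_apply]
        module } with hW
  set M : E2 →ₗ[ℝ] E2 := (B.repr.toLinearEquiv.toLinearMap).comp W with hM
  have hψ : ∀ y : E2, ι (M y)
      = (1 - y 0 - y 1) • a (v 0) + y 0 • a (v 1) + y 1 • a (v 2) := by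
    intro y
    have h1 : ι (M y) = a (v 0) + ((W y : V) : E3) := by
      simp [hι_def, hM]
    rw [h1]
    have h2 : ((W y : V) : E3) = y 0 • b 0 + y 1 • b 1 := by
      simp [hW, hbb]
    have hb0 : b 0 = a (v 1) - a (v 0) := by simp [hb]
    have hb1 : b 1 = a (v 2) - a (v 0) := by
      simp [hb, Fin.succ_one_eq_two]
    rw [h2, hb0, hb1]
    module
  -- injectivity of M
  have hMinj : Function.Injective M := by
    intro p q hpq
    have hWpq : W p = W q := by
      have h := congrArg B.repr.toLinearEquiv.symm hpq
      simpa [hM] using h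
    have hcoords : p 0 • b 0 + p 1 • b 1 = q 0 • b 0 + q 1 • b 1 := by
      have h := congrArg (Subtype.val) hWpq
      simpa [hW, hbb] using h
    have hz : ∑ k : Fin 2, (p k - q k) • b k = 0 := by
      rw [Fin.sum_univ_two, sub_smul, sub_smul, sub_add_sub_comm, hcoords, sub_self]
    have hall := Fintype.linearIndependent_iff.mp hli _ hz
    ext k
    have := hall k
    have : p k = q k := by linarith [sub_eq_zero.mp this]
    exact this
  -- the domain triangle in E2
  set T2 : Set E2 := Theta ⁻¹' Tri with hT2def
  have hT2mem : ∀ y : E2, y ∈ T2 ↔ (0 ≤ y 0 ∧ 0 ≤ y 1 ∧ y 0 + y 1 ≤ 1) :=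
    fun y => Iff.rfl
  have hTheta_cont : Continuous Theta :=
    ((EuclideanSpace.proj (0 : Fin 2)).continuous).prodMk
      ((EuclideanSpace.proj (1 : Fin 2)).continuous)
  have hT2meas : MeasurableSet T2 :=
    (isClosed_Tri.preimage hTheta_cont).measurableSet
  -- the face as the image of the triangle
  have hface : face a F = (fun y => ι (M y)) '' T2 := by
    have hpts : a '' {j | j ≠ F} = {a (v 0), a (v 1), a (v 2)} := by
      ext x
      simp only [Set.mem_image, Set.mem_setOf_eq, Set.mem_insert_iff,
        Set.mem_singleton_iff, hrange]
      constructor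
      · rintro ⟨j, hj, rfl⟩
        rcases hj with rfl | rfl | rfl <;> tauto
      · rintro (rfl | rfl | rfl)
        exacts [⟨v 0, Or.inl rfl, rfl⟩, ⟨v 1, Or.inr (Or.inl rfl), rfl⟩,
          ⟨v 2, Or.inr (Or.inr rfl), rfl⟩]
    rw [face, hpts]
    apply Set.Subset.antisymm
    · apply convexHull_min
      · rintro x (rfl | rfl | rfl)
        · refine ⟨0, ?_, ?_⟩
          · rw [hT2mem]; norm_num
          · show ι (M 0) = a (v 0)
            rw [hψ]; norm_num
        · refine ⟨EuclideanSpace.single 0 1, ?_, ?_⟩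
          · rw [hT2mem]; simp [EuclideanSpace.single_apply]
          · show ι (M (EuclideanSpace.single 0 1)) = a (v 1)
            rw [hψ]; simp [EuclideanSpace.single_apply]
        · refine ⟨EuclideanSpace.single 1 1, ?_, ?_⟩
          · rw [hT2mem]; simp [EuclideanSpace.single_apply]
          · show ι (M (EuclideanSpace.single 1 1)) = a (v 2)
            rw [hψ]; simp [EuclideanSpace.single_apply]
      · rintro x₁ ⟨u, hu, rfl⟩ x₂ ⟨w, hw, rfl⟩ p q hp hq hpq
        rw [hT2mem] at hu hw
        obtain ⟨hu0, hu1, hu2⟩ := hu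
        obtain ⟨hw0, hw1, hw2⟩ := hw
        refine ⟨p • u + q • w, ?_, ?_⟩
        · rw [hT2mem]
          have e0 : (p • u + q • w) 0 = p * u 0 + q * w 0 := rfl
          have e1 : (p • u + q • w) 1 = p * u 1 + q * w 1 := rfl
          rw [e0, e1]
          exact ⟨by nlinarith [mul_nonneg hp hu0, mul_nonneg hq hw0],
            by nlinarith [mul_nonneg hp hu1, mul_nonneg hq hw1], by nlinarith⟩
        · show ι (M (p • u + q • w)) = p • ι (M u) + q • ι (M w)
          rw [hψ, hψ, hψ]
          have e0 : (p • u + q • w) 0 = p * u 0 + q * w 0 := rfl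
          have e1 : (p • u + q • w) 1 = p * u 1 + q * w 1 := rfl
          rw [e0, e1]
          have hq' : q = 1 - p := by linarith
          rw [hq']
          module
    · rintro - ⟨y, hy, rfl⟩
      show ι (M y) ∈ _
      rw [hψ]
      rw [hT2mem] at hy
      obtain ⟨hy0, hy1, hy2⟩ := hy
      have hmem := (convex_convexHull ℝ ({a (v 0), a (v 1), a (v 2)} : Set E3)).sum_mem
        (t := (Finset.univ : Finset (Fin 3)))
        (w := ![1 - y 0 - y 1, y 0, y 1]) (z := ![a (v 0), a (v 1), a (v 2)])
        (by
          intro k _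
          fin_cases k <;> simp <;> linarith)
        (by simp [Fin.sum_univ_three]; ring)
        (by
          intro k _
          apply subset_convexHull
          fin_cases k <;> simp)
      have hexp : ∑ k : Fin 3, (![1 - y 0 - y 1, y 0, y 1] : Fin 3 → ℝ) k •
          (![a (v 0), a (v 1), a (v 2)] : Fin 3 → E3) k
          = (1 - y 0 - y 1) • a (v 0) + y 0 • a (v 1) + y 1 • a (v 2) := by
        rw [Fin.sum_univ_three]
        simp
      rwa [hexp] at hmem
  -- measurable embedding of the isometry
  have hemb : MeasurableEmbedding ι := hι.isClosedEmbedding.measurableEmbedding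
  have hfcompact : IsCompact (face a F) :=
    (Set.Finite.image a (Set.toFinite _)).isCompact_convexHull ℝ
  have hfmeas : MeasurableSet (face a F) := hfcompact.isClosed.measurableSet
  have hfsub : face a F ⊆ Set.range ι := by
    rw [hface]
    rintro - ⟨y, -, rfl⟩
    exact ⟨M y, rfl⟩
  have hmap : Measure.map ι μH[2] = (μH[2] : Measure E3).restrict (Set.range ι) :=
    hι.map_hausdorffMeasure (Or.inl (by norm_num))
  have hpre : ι ⁻¹' (face a F) = ⇑M '' T2 := by
    rw [hface, ← Set.image_image, Set.preimage_image_eq _ hinj]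
  set c : ℝ≥0 := (μH[2] : Measure E2).addHaarScalarFactor volume with hc
  set Mc : E2 →L[ℝ] E2 := LinearMap.toContinuousLinearMap M with hMc
  have step1 : ∫ x in face a F, g x ∂(μH[2])
      = ∫ y in ⇑M '' T2, g (ι y) ∂(μH[2]) := by
    have h1 : (μH[2] : Measure E3).restrict (face a F)
        = ((μH[2] : Measure E3).restrict (Set.range ι)).restrict (face a F) := by
      rw [Measure.restrict_restrict hfmeas, Set.inter_eq_self_of_subset_left hfsub]
    calc ∫ x in face a F, g x ∂(μH[2])
        = ∫ x in face a F, g x ∂((μH[2] : Measure E3).restrict (Set.range ι)) := by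
          rw [Measure.restrict_restrict hfmeas, Set.inter_eq_self_of_subset_left hfsub]
      _ = ∫ x in face a F, g x ∂(Measure.map ι μH[2]) := by rw [hmap]
      _ = ∫ y in ι ⁻¹' (face a F), g (ι y) ∂(μH[2]) := hemb.setIntegral_map g _
      _ = ∫ y in ⇑M '' T2, g (ι y) ∂(μH[2]) := by rw [hpre]
  have step2 : ∫ y in ⇑M '' T2, g (ι y) ∂(μH[2] : Measure E2)
      = (c : ℝ≥0∞).toReal • ∫ y in ⇑M '' T2, g (ι y) ∂(volume : Measure E2) := by
    rw [haus2_eq_smul, ← hc]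
    rw [Measure.restrict_smul, integral_smul_measure]
  have step3 : ∫ y in ⇑M '' T2, g (ι y) ∂(volume : Measure E2)
      = |Mc.det| • ∫ y in T2, g (ι (M y)) ∂(volume : Measure E2) := by
    have hder : ∀ x ∈ T2, HasFDerivWithinAt (⇑M : E2 → E2) Mc T2 x :=
      fun x _ => Mc.hasFDerivAt.hasFDerivWithinAt
    rw [integral_image_eq_integral_abs_det_fderiv_smul volume hT2meas hder hMinj.injOn
      (fun y => g (ι y))]
    rw [← integral_smul]
  have step4 : ∫ y in T2, g (ι (M y)) ∂(volume : Measure E2) = 0 := by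
    have heq : ∀ y : E2, g (ι (M y)) = G (Theta y) := by
      intro y
      rw [hψ y]
      exact hG (y 0) (y 1)
    calc ∫ y in T2, g (ι (M y)) ∂(volume : Measure E2)
        = ∫ y in Theta ⁻¹' Tri, G (Theta y) ∂(volume : Measure E2) := by
          rw [hT2def]
          exact setIntegral_congr_fun hT2meas fun y _ => heq y
      _ = ∫ p in Tri, G p := Theta_mp.setIntegral_preimage_emb Theta_emb G Tri
      _ = 0 := hTri
  rw [step1, step2, step3, step4, smul_zero, smul_zero]

lemma evalP_phi (lam : Fin 4 → MvPolynomial (Fin 3) ℝ) (i : Fin 4) (x : E3) :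
    evalP x ((-2) * lam i ^ 2 + 4 * lam i - 2
        + 3 * ∑ j ∈ Finset.univ.erase i, lam j ^ 2
        + 30 * ∏ j ∈ Finset.univ.erase i, lam j)
      = (-2) * (evalP x (lam i)) ^ 2 + 4 * evalP x (lam i) - 2
        + 3 * ∑ j ∈ Finset.univ.erase i, (evalP x (lam j)) ^ 2
        + 30 * ∏ j ∈ Finset.univ.erase i, evalP x (lam j) := by
  simp only [evalP, map_add, map_sub, map_mul, map_pow, map_sum, map_prod, map_neg,
    map_ofNat, map_one]

lemma case_diag (a : Fin 4 → E3) (hind : AffineIndependent ℝ a)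
    (lam : Fin 4 → MvPolynomial (Fin 3) ℝ)
    (hdeg : ∀ j, (lam j).totalDegree ≤ 1)
    (hval : ∀ j j', evalP (a j') (lam j) = if j = j' then 1 else 0)
    (i : Fin 4) (v : Fin 3 → Fin 4) (hv : Function.Injective v)
    (hrange : ∀ j : Fin 4, j ≠ i ↔ (j = v 0 ∨ j = v 1 ∨ j = v 2))
    (herase : Finset.univ.erase i = {v 0, v 1, v 2})
    (q : MvPolynomial (Fin 3) ℝ) (hq : q.totalDegree ≤ 1) :
    ∫ x in face a i,
      evalP x ((-2) * lam i ^ 2 + 4 * lam i - 2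
          + 3 * ∑ j ∈ Finset.univ.erase i, lam j ^ 2
          + 30 * ∏ j ∈ Finset.univ.erase i, lam j) * evalP x q ∂(μH[2]) = 0 := by
  have h01 : v 0 ≠ v 1 := fun h => by simpa using hv h
  have h02 : v 0 ≠ v 2 := fun h => by simpa using hv h
  have h12 : v 1 ≠ v 2 := fun h => by simpa using hv h
  have hvi0 : v 0 ≠ i := (hrange (v 0)).mpr (Or.inl rfl)
  have hvi1 : v 1 ≠ i := (hrange (v 1)).mpr (Or.inr (Or.inl rfl))
  have hvi2 : v 2 ≠ i := (hrange (v 2)).mpr (Or.inr (Or.inr rfl))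
  refine reduce a hind v hv i hrange _
    (fun p : ℝ × ℝ =>
      ((-2) + 3*((1-p.1-p.2)^2 + p.1^2 + p.2^2) + 30*((1-p.1-p.2)*p.1*p.2))
      * ((1-p.1-p.2)*(evalP (a (v 0)) q) + p.1*(evalP (a (v 1)) q)
          + p.2*(evalP (a (v 2)) q))) ?_ (tri1 _ _ _)
  intro s t
  have haff : ∀ p : MvPolynomial (Fin 3) ℝ, p.totalDegree ≤ 1 →
      evalP ((1 - s - t) • a (v 0) + s • a (v 1) + t • a (v 2)) p
        = (1-s-t) * evalP (a (v 0)) p + s * evalP (a (v 1)) p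
          + t * evalP (a (v 2)) p :=
    fun p hp => eval_affine hp _ _ _ s t
  show evalP _ _ * evalP _ q = _
  rw [evalP_phi, herase]
  rw [Finset.sum_insert (by simp [h01, h02]), Finset.sum_insert (by simp [h12]),
    Finset.sum_singleton, Finset.prod_insert (by simp [h01, h02]),
    Finset.prod_insert (by simp [h12]), Finset.prod_singleton]
  rw [haff _ (hdeg (v 0)), haff _ (hdeg (v 1)), haff _ (hdeg (v 2)),
    haff _ (hdeg i), haff q hq]
  simp only [hval, if_neg (Ne.symm hvi0), if_neg (Ne.symm hvi1), if_neg (Ne.symm hvi2),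
    if_neg h01, if_neg h02, if_neg h12, if_neg (Ne.symm h01), if_neg (Ne.symm h02),
    if_neg (Ne.symm h12), if_pos rfl, if_true]
  ring

lemma case_off (a : Fin 4 → E3) (hind : AffineIndependent ℝ a)
    (lam : Fin 4 → MvPolynomial (Fin 3) ℝ)
    (hdeg : ∀ j, (lam j).totalDegree ≤ 1)
    (hval : ∀ j j', evalP (a j') (lam j) = if j = j' then 1 else 0)
    (i F : Fin 4) (v : Fin 3 → Fin 4) (hv : Function.Injective v)
    (hv0 : v 0 = i)
    (hrange : ∀ j : Fin 4, j ≠ F ↔ (j = v 0 ∨ j = v 1 ∨ j = v 2))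
    (herase : Finset.univ.erase i = {F, v 1, v 2})
    (q : MvPolynomial (Fin 3) ℝ) (hq : q.totalDegree ≤ 1) :
    ∫ x in face a F,
      evalP x ((-2) * lam i ^ 2 + 4 * lam i - 2
          + 3 * ∑ j ∈ Finset.univ.erase i, lam j ^ 2
          + 30 * ∏ j ∈ Finset.univ.erase i, lam j) * evalP x q ∂(μH[2]) = 0 := by
  have h01 : v 0 ≠ v 1 := fun h => by simpa using hv h
  have h02 : v 0 ≠ v 2 := fun h => by simpa using hv h
  have h12 : v 1 ≠ v 2 := fun h => by simpa using hv h
  have hvF0 : v 0 ≠ F := (hrange (v 0)).mpr (Or.inl rfl)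
  have hvF1 : v 1 ≠ F := (hrange (v 1)).mpr (Or.inr (Or.inl rfl))
  have hvF2 : v 2 ≠ F := (hrange (v 2)).mpr (Or.inr (Or.inr rfl))
  have hi1 : i ≠ v 1 := hv0 ▸ h01
  have hi2 : i ≠ v 2 := hv0 ▸ h02
  have hiv0 : i = v 0 := hv0.symm
  refine reduce a hind v hv F hrange _
    (fun p : ℝ × ℝ =>
      ((-2)*(1-p.1-p.2)^2 + 4*(1-p.1-p.2) - 2 + 3*(p.1^2 + p.2^2))
      * ((1-p.1-p.2)*(evalP (a (v 0)) q) + p.1*(evalP (a (v 1)) q)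
          + p.2*(evalP (a (v 2)) q))) ?_ (tri2 _ _ _)
  intro s t
  have haff : ∀ p : MvPolynomial (Fin 3) ℝ, p.totalDegree ≤ 1 →
      evalP ((1 - s - t) • a (v 0) + s • a (v 1) + t • a (v 2)) p
        = (1-s-t) * evalP (a (v 0)) p + s * evalP (a (v 1)) p
          + t * evalP (a (v 2)) p :=
    fun p hp => eval_affine hp _ _ _ s t
  have hF1 : F ≠ v 1 := Ne.symm hvF1
  have hF2 : F ≠ v 2 := Ne.symm hvF2
  show evalP _ _ * evalP _ q = _
  rw [evalP_phi, herase]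
  rw [Finset.sum_insert (by simp [hF1, hF2]), Finset.sum_insert (by simp [h12]),
    Finset.sum_singleton, Finset.prod_insert (by simp [hF1, hF2]),
    Finset.prod_insert (by simp [h12]), Finset.prod_singleton]
  rw [haff _ (hdeg F), haff _ (hdeg (v 1)), haff _ (hdeg (v 2)),
    haff _ (hdeg i), haff q hq]
  simp only [hval, if_neg (Ne.symm hvF0), if_neg hF1, if_neg hF2,
    if_neg hi1, if_neg hi2, if_pos hiv0,
    if_neg h12, if_neg (Ne.symm h01), if_neg (Ne.symm h02), if_neg (Ne.symm h12),
    if_pos rfl, if_true]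
  ring

/-- the bubbles `φᵢ = −2λᵢ² + 4λᵢ − 2 + 3∑_{j≠i}λⱼ² + 30∏_{j≠i}λⱼ`
have vanishing first-order moments on every facet. -/
theorem stmt1 (a : Fin 4 → E3) (hind : AffineIndependent ℝ a)
    (lam : Fin 4 → MvPolynomial (Fin 3) ℝ)
    (hdeg : ∀ i, (lam i).totalDegree ≤ 1)
    (hval : ∀ i j, evalP (a j) (lam i) = if i = j then 1 else 0)
    (i : Fin 4) :
    ∀ (F : Fin 4) (q : MvPolynomial (Fin 3) ℝ), q.totalDegree ≤ 1 →
      ∫ x in face a F,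
        evalP x ((-2) * lam i ^ 2 + 4 * lam i - 2
            + 3 * ∑ j ∈ Finset.univ.erase i, lam j ^ 2
            + 30 * ∏ j ∈ Finset.univ.erase i, lam j) * evalP x q ∂(μH[2]) = 0 := by
  intro F q hq
  fin_cases i <;> fin_cases F
  · exact case_diag a hind lam hdeg hval 0 ![1, 2, 3]
      (by decide) (by decide) (by decide) q hq
  · exact case_off a hind lam hdeg hval 0 1 ![0, 2, 3]
      (by decide) (by decide) (by decide) (by decide) q hq
  · exact case_off a hind lam hdeg hval 0 2 ![0, 1, 3]
      (by decide) (by decide) (by decide) (by decide) q hq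
  · exact case_off a hind lam hdeg hval 0 3 ![0, 1, 2]
      (by decide) (by decide) (by decide) (by decide) q hq
  · exact case_off a hind lam hdeg hval 1 0 ![1, 2, 3]
      (by decide) (by decide) (by decide) (by decide) q hq
  · exact case_diag a hind lam hdeg hval 1 ![0, 2, 3]
      (by decide) (by decide) (by decide) q hq
  · exact case_off a hind lam hdeg hval 1 2 ![1, 0, 3]
      (by decide) (by decide) (by decide) (by decide) q hq
  · exact case_off a hind lam hdeg hval 1 3 ![1, 0, 2]
      (by decide) (by decide) (by decide) (by decide) q hq
  · exact case_off a hind lam hdeg hval 2 0 ![2, 1, 3]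
      (by decide) (by decide) (by decide) (by decide) q hq
  · exact case_off a hind lam hdeg hval 2 1 ![2, 0, 3]
      (by decide) (by decide) (by decide) (by decide) q hq
  · exact case_diag a hind lam hdeg hval 2 ![0, 1, 3]
      (by decide) (by decide) (by decide) q hq
  · exact case_off a hind lam hdeg hval 2 3 ![2, 0, 1]
      (by decide) (by decide) (by decide) (by decide) q hq
  · exact case_off a hind lam hdeg hval 3 0 ![3, 1, 2]
      (by decide) (by decide) (by decide) (by decide) q hq
  · exact case_off a hind lam hdeg hval 3 1 ![3, 0, 2]
      (by decide) (by decide) (by decide) (by decide) q hq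
  · exact case_off a hind lam hdeg hval 3 2 ![3, 0, 1]
      (by decide) (by decide) (by decide) (by decide) q hq
  · exact case_diag a hind lam hdeg hval 3 ![0, 1, 2]
      (by decide) (by decide) (by decide) q hq
end
end

section
/- The eight cubic polynomials φᵢ = 5λᵢ³ − 5λᵢ² + λᵢ (i = 1,…,4) and ψᵢ = −2λᵢ² + 4λᵢ − 2 + 3·∑_{j≠i} λⱼ² + 30·∏_{j≠i} λⱼ (i = 1,…,4) on a nondegenerate tetrahedron T are linearly independent. -/
open MeasureTheory MvPolynomial
open scoped RealInnerProductSpace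

noncomputable section

lemma mono_classify {d : Fin 3 →₀ ℕ} (hd : (d.sum fun _ e => e) ≤ 1) :
    d = 0 ∨ ∃ i, d = Finsupp.single i 1 := by
  rcases eq_or_ne d 0 with h | h
  · exact Or.inl h
  · right
    obtain ⟨i, hi⟩ : ∃ i, d i ≠ 0 := by
      by_contra hc
      push_neg at hc
      exact h (Finsupp.ext fun j => hc j)
    have hsum : (d.sum fun _ e => e) = ∑ j ∈ d.support, d j := rfl
    have hmem : i ∈ d.support := Finsupp.mem_support_iff.mpr hi
    have h1 : d i ≤ 1 := le_trans (Finset.single_le_sum (fun j _ => Nat.zero_le _) hmem) (hsum ▸ hd)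
    have hdi : d i = 1 := le_antisymm h1 (Nat.one_le_iff_ne_zero.mpr hi)
    refine ⟨i, Finsupp.ext fun j => ?_⟩
    rcases eq_or_ne j i with rfl | hj
    · simp [hdi]
    · rw [Finsupp.single_apply, if_neg (Ne.symm hj)]
      by_contra hc
      have hjm : j ∈ d.support := Finsupp.mem_support_iff.mpr hc
      have hle : d i + d j ≤ ∑ k ∈ d.support, d k := by
        rw [← Finset.sum_pair (Ne.symm hj)]
        exact Finset.sum_le_sum_of_subset (by intro k hk; simp at hk; rcases hk with rfl|rfl <;> assumption)
      have := hsum ▸ hd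
      omega

lemma eval_affine_s2 (p : MvPolynomial (Fin 3) ℝ)
    (w : Fin 4 → ℝ) (hw : ∑ j, w j = 1) (v : Fin 4 → E3)
    (hmono : ∀ d ∈ p.support, d = 0 ∨ ∃ i, d = Finsupp.single i 1) :
    evalP (∑ j, w j • v j) p = ∑ j, w j * evalP (v j) p := by
  simp only [evalP]
  conv_lhs => rw [← p.support_sum_monomial_coeff, map_sum]
  have key : ∀ d ∈ p.support,
      eval (fun j => (∑ j, w j • v j) j) (monomial d (coeff d p))
        = ∑ j, w j * eval (fun k => v j k) (monomial d (coeff d p)) := by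
    intro d hd
    rcases hmono d hd with rfl | ⟨i, rfl⟩
    · simp only [monomial_zero', eval_C]
      rw [← Finset.sum_mul, hw, one_mul]
    · simp only [eval_monomial]
      have happ : (∑ j, w j • v j) i = ∑ j, w j * v j i := by
        have h := map_sum (EuclideanSpace.proj (𝕜 := ℝ) i) (fun j => w j • v j) Finset.univ
        simp only [PiLp.proj_apply, _root_.map_smul, smul_eq_mul] at h
        exact h
      simp only [Finsupp.prod_single_index, pow_zero, pow_one]
      rw [happ, Finset.mul_sum]
      exact Finset.sum_congr rfl fun j _ => by ring
  rw [Finset.sum_congr rfl key, Finset.sum_comm]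
  exact Finset.sum_congr rfl fun j _ => by
    rw [← Finset.mul_sum, ← map_sum, p.support_sum_monomial_coeff]

set_option maxHeartbeats 1000000 in
/-- the eight cubic bubble functions `φᵢ` and `ψᵢ` are linearly
independent as functions on the tetrahedron. -/
theorem stmt2 (a : Fin 4 → E3) (hind : AffineIndependent ℝ a)
    (lam : Fin 4 → MvPolynomial (Fin 3) ℝ)
    (hdeg : ∀ i, (lam i).totalDegree ≤ 1)
    (hval : ∀ i j, evalP (a j) (lam i) = if i = j then 1 else 0) :
    LinearIndependent ℝ (fun s : Fin 4 ⊕ Fin 4 =>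
      (tetra a).restrict (fun x => evalP x
        (Sum.elim
          (fun i => 5 * lam i ^ 3 - 5 * lam i ^ 2 + lam i)
          (fun i => (-2) * lam i ^ 2 + 4 * lam i - 2
              + 3 * ∑ j ∈ Finset.univ.erase i, lam j ^ 2
              + 30 * ∏ j ∈ Finset.univ.erase i, lam j) s))) := by
  rw [Fintype.linearIndependent_iff]
  intro g hg
  set c : Fin 4 → ℝ := fun i => g (Sum.inl i) with hc
  set d : Fin 4 → ℝ := fun i => g (Sum.inr i) with hd
  have master : ∀ x, x ∈ tetra a →
      (∑ i, c i * (5 * (evalP x (lam i))^3 - 5*(evalP x (lam i))^2 + evalP x (lam i)))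
      + ∑ i, d i * ((-2) * (evalP x (lam i))^2 + 4 * evalP x (lam i) - 2
          + 3 * ∑ j ∈ Finset.univ.erase i, (evalP x (lam j))^2
          + 30 * ∏ j ∈ Finset.univ.erase i, evalP x (lam j)) = 0 := by
    intro x hx
    have h := congrFun hg ⟨x, hx⟩
    simp only [Finset.sum_apply, Pi.smul_apply, Set.restrict_apply, Set.restrict, smul_eq_mul,
      Pi.zero_apply, Fintype.sum_sum_type, Sum.elim_inl, Sum.elim_inr, evalP,
      map_add, map_sub, map_mul, map_pow, map_neg, map_ofNat, eval_C, map_sum, map_prod] at h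
    simp only [evalP]
    convert h using 2 <;> ring
  -- the points
  have hvert : ∀ j, a j ∈ tetra a := fun j => subset_convexHull ℝ _ ⟨j, rfl⟩
  set w : Fin 4 → Fin 4 → ℝ := fun j k => if k = j then 0 else 1/3 with hw
  have hwsum : ∀ j, ∑ k, w j k = 1 := by
    intro j; fin_cases j <;> (simp [hw, Fin.sum_univ_four]; try norm_num)
  set m : Fin 4 → E3 := fun j => ∑ k, w j k • a k with hmdef
  have hm : ∀ j, m j ∈ tetra a := by
    intro j
    exact Convex.sum_mem (convex_convexHull ℝ _)
      (fun k _ => by by_cases h : k = j <;> simp [hw, h])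
      (hwsum j) (fun k _ => hvert k)
  have hev : ∀ i j, evalP (m j) (lam i) = if i = j then 0 else 1/3 := by
    intro i j
    rw [hmdef]
    rw [eval_affine_s2 (lam i) (w j) (hwsum j) a
      (fun dd hdd => mono_classify (le_trans (MvPolynomial.le_totalDegree hdd) (hdeg i)))]
    simp only [hval, mul_ite, mul_one, mul_zero]
    rw [Finset.sum_ite_eq]
    simp [hw]
  have er0 : (Finset.univ.erase (0:Fin 4)) = {1,2,3} := by decide
  have er1 : (Finset.univ.erase (1:Fin 4)) = {0,2,3} := by decide
  have er2 : (Finset.univ.erase (2:Fin 4)) = {0,1,3} := by decide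
  have er3 : (Finset.univ.erase (3:Fin 4)) = {0,1,2} := by decide
  have hA0 := master (a 0) (hvert 0)
  have hA1 := master (a 1) (hvert 1)
  have hA2 := master (a 2) (hvert 2)
  have hA3 := master (a 3) (hvert 3)
  have hB0 := master (m 0) (hm 0)
  have hB1 := master (m 1) (hm 1)
  have hB2 := master (m 2) (hm 2)
  have hB3 := master (m 3) (hm 3)
  simp [hval, hev, Fin.sum_univ_four, er0, er1, er2, er3] at hA0 hA1 hA2 hA3 hB0 hB1 hB2 hB3
  norm_num at hA0 hA1 hA2 hA3 hB0 hB1 hB2 hB3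
  have e0 : d 0 = 0 := by linarith
  have e1 : d 1 = 0 := by linarith
  have e2 : d 2 = 0 := by linarith
  have e3 : d 3 = 0 := by linarith
  have f0 : c 0 = 0 := by linarith
  have f1 : c 1 = 0 := by linarith
  have f2 : c 2 = 0 := by linarith
  have f3 : c 3 = 0 := by linarith
  intro s
  rcases s with i | i <;> fin_cases i <;>
    first
    | exact f0 | exact f1 | exact f2 | exact f3
    | exact e0 | exact e1 | exact e2 | exact e3
end
end
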